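/- Let f : ℝ^d → ℝ be L-smooth and bounded below by f*, and let h : ℝ^d → ℝ be differentiable such that for some m ∈ [0,1) and ζ ≥ 0, ‖∇f(x) − ∇h(x)‖² ≤ m‖∇f(x)‖² + ζ² for all x ∈ ℝ^d. Fix integers K ≥ 1, T ≥ 1, a step size 0 < η ≤ 1/L, and an initial point x⁰. Define the naive iterates: for t = 1,…,T set y^t_0 = x^{t−1}, y^t_1 = y^t_0 − η∇f(y^t_0), y^t_k = y^t_{k−1} − η∇h(y^t_{k−1}) for k = 2,…,K, and x^t = y^t_K. Then (1/(2KT)) Σ_{t=1}^T ‖∇f(x^{t−1})‖² + ((1−m)/(2KT)) Σ_{t=1}^T Σ_{k=2}^K ‖∇f(y^t_{k−1})‖² ≤ (f(x⁰) − f*)/(KTη) + ((K−1)/K)·ζ². -/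

import Mathlib

open Finset

open Finset InnerProductSpace

variable {F : Type*} [NormedAddCommGroup F] [InnerProductSpace ℝ F] [CompleteSpace F]

local notation "⟪" x ", " y "⟫" => @inner ℝ _ _ x y

lemma grad_inner_eq (f : F → ℝ) (p v : F) :
    fderiv ℝ f p v = ⟪gradient f p, v⟫ := by
  rw [← InnerProductSpace.toDual_apply_apply, gradient, LinearIsometryEquiv.apply_symm_apply]

lemma descent_lemma (f : F → ℝ) (L : ℝ) (hL : 0 ≤ L) (hfd : Differentiable ℝ f)
    (hsmooth : ∀ x y : F, ‖gradient f x - gradient f y‖ ≤ L * ‖x - y‖) (x v : F) :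
    f (x + v) ≤ f x + ⟪gradient f x, v⟫ + L / 2 * ‖v‖ ^ 2 := by
  have hgradcont : Continuous (gradient f) := by
    have : LipschitzWith (Real.toNNReal L) (gradient f) := by
      apply LipschitzWith.of_dist_le_mul
      intro a b
      rw [dist_eq_norm, dist_eq_norm, Real.coe_toNNReal L hL]
      exact hsmooth a b
    exact this.continuous
  have hderiv : ∀ t : ℝ, HasDerivAt (fun s : ℝ => f (x + s • v))
      ⟪gradient f (x + t • v), v⟫ t := by
    intro t
    have hc : HasDerivAt (fun s : ℝ => x + s • v) v t := by
      simpa using ((hasDerivAt_id t).smul_const v).const_add x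
    have hf : HasFDerivAt f (fderiv ℝ f (x + t • v)) (x + t • v) :=
      (hfd (x + t • v)).hasFDerivAt
    have := hf.comp_hasDerivAt t hc
    rw [grad_inner_eq] at this
    exact this
  have hcont : Continuous fun t : ℝ => ⟪gradient f (x + t • v), v⟫ := by
    apply Continuous.inner
    · exact hgradcont.comp (by continuity)
    · exact continuous_const
  have hFTC : f (x + v) - f x = ∫ t in (0:ℝ)..1, ⟪gradient f (x + t • v), v⟫ := by
    have := intervalIntegral.integral_eq_sub_of_hasDerivAt
      (f := fun s : ℝ => f (x + s • v)) (a := 0) (b := 1)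
      (fun t _ => hderiv t) (hcont.intervalIntegrable 0 1)
    simpa using this.symm
  have hbound : (∫ t in (0:ℝ)..1, ⟪gradient f (x + t • v), v⟫)
      ≤ ∫ t in (0:ℝ)..1, (⟪gradient f x, v⟫ + L * t * ‖v‖ ^ 2) := by
    apply intervalIntegral.integral_mono_on (by norm_num)
      (hcont.intervalIntegrable 0 1)
      ((by continuity : Continuous fun t : ℝ => ⟪gradient f x, v⟫ + L * t * ‖v‖ ^ 2).intervalIntegrable 0 1)
    intro t ht
    rcases Set.mem_Icc.mp ht with ⟨ht0, ht1⟩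
    have h1 : ⟪gradient f (x + t • v), v⟫ - ⟪gradient f x, v⟫
        = ⟪gradient f (x + t • v) - gradient f x, v⟫ := by
      rw [inner_sub_left]
    have h2 : ⟪gradient f (x + t • v) - gradient f x, v⟫
        ≤ ‖gradient f (x + t • v) - gradient f x‖ * ‖v‖ := real_inner_le_norm _ _
    have h3 : ‖gradient f (x + t • v) - gradient f x‖ ≤ L * (t * ‖v‖) := by
      have := hsmooth (x + t • v) x
      simpa [norm_smul, abs_of_nonneg ht0] using this
    have h4 : ‖gradient f (x + t • v) - gradient f x‖ * ‖v‖ ≤ L * t * ‖v‖ ^ 2 := by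
      have hv : (0:ℝ) ≤ ‖v‖ := norm_nonneg v
      nlinarith [mul_le_mul_of_nonneg_right h3 hv]
    linarith
  have hval : (∫ t in (0:ℝ)..1, (⟪gradient f x, v⟫ + L * t * ‖v‖ ^ 2))
      = ⟪gradient f x, v⟫ + L / 2 * ‖v‖ ^ 2 := by
    have hint : IntervalIntegrable (fun t : ℝ => L * t * ‖v‖ ^ 2) MeasureTheory.volume 0 1 :=
      (by continuity : Continuous fun t : ℝ => L * t * ‖v‖ ^ 2).intervalIntegrable 0 1
    rw [intervalIntegral.integral_add intervalIntegrable_const hint]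
    have heq : (fun t : ℝ => L * t * ‖v‖ ^ 2) = fun t : ℝ => (L * ‖v‖ ^ 2) * t := by
      funext t; ring
    rw [heq, intervalIntegral.integral_const_mul]
    simp [integral_id]
    ring
  linarith [hFTC ▸ le_trans (hFTC ▸ hbound) (le_of_eq hval)]

lemma step_lemma (f : F → ℝ) (L η : ℝ) (hL : 0 < L) (hfd : Differentiable ℝ f)
    (hsmooth : ∀ x y : F, ‖gradient f x - gradient f y‖ ≤ L * ‖x - y‖)
    (hη0 : 0 < η) (hηL : η ≤ 1 / L) (x g : F) :
    f (x - η • g) ≤ f x - η / 2 * (‖gradient f x‖ ^ 2 - ‖gradient f x - g‖ ^ 2) := by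
  have hd := descent_lemma f L hL.le hfd hsmooth x (-(η • g))
  rw [← sub_eq_add_neg] at hd
  have hLη : η * L ≤ 1 := (le_div_iff₀ hL).mp hηL
  have hin : ⟪gradient f x, -(η • g)⟫ = -(η * ⟪gradient f x, g⟫) := by
    rw [inner_neg_right, real_inner_smul_right]
  have hnrm : ‖-(η • g)‖ ^ 2 = η ^ 2 * ‖g‖ ^ 2 := by
    rw [norm_neg, norm_smul, Real.norm_eq_abs, mul_pow, sq_abs]
  rw [hin, hnrm] at hd
  have hid := norm_sub_sq_real (gradient f x) g
  have hkey : L / 2 * (η ^ 2 * ‖g‖ ^ 2) ≤ η / 2 * ‖g‖ ^ 2 := by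
    nlinarith [sq_nonneg ‖g‖, mul_nonneg hη0.le (sq_nonneg ‖g‖)]
  nlinarith [hd, hid, hkey]

/-- convergence bound for the naive approach under the
`(m, ζ²)`-bounded gradient bias assumption. -/
theorem stmt_2 {d : ℕ} (f h : EuclideanSpace ℝ (Fin d) → ℝ)
    (L fstar m ζ : ℝ) (hL : 0 < L)
    (hfd : Differentiable ℝ f)
    (hsmooth : ∀ x y : EuclideanSpace ℝ (Fin d),
      ‖gradient f x - gradient f y‖ ≤ L * ‖x - y‖)
    (hfbdd : ∀ x, fstar ≤ f x)
    (hhd : Differentiable ℝ h)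
    (hm0 : 0 ≤ m) (hm1 : m < 1) (hζ : 0 ≤ ζ)
    (hbias : ∀ x : EuclideanSpace ℝ (Fin d),
      ‖gradient f x - gradient h x‖ ^ 2 ≤ m * ‖gradient f x‖ ^ 2 + ζ ^ 2)
    (K T : ℕ) (hK : 1 ≤ K) (hT : 1 ≤ T)
    (η : ℝ) (hη0 : 0 < η) (hηL : η ≤ 1 / L)
    (x : ℕ → EuclideanSpace ℝ (Fin d))
    (y : ℕ → ℕ → EuclideanSpace ℝ (Fin d))
    (hy0 : ∀ t, 1 ≤ t → y t 0 = x (t - 1))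
    (hy1 : ∀ t, 1 ≤ t → y t 1 = y t 0 - η • gradient f (y t 0))
    (hyk : ∀ t, 1 ≤ t → ∀ k, 2 ≤ k → k ≤ K →
      y t k = y t (k - 1) - η • gradient h (y t (k - 1)))
    (hx : ∀ t, 1 ≤ t → x t = y t K) :
    (1 / (2 * K * T)) * ∑ t ∈ Finset.Icc 1 T, ‖gradient f (x (t - 1))‖ ^ 2
      + ((1 - m) / (2 * K * T)) *
          ∑ t ∈ Finset.Icc 1 T, ∑ k ∈ Finset.Icc 2 K, ‖gradient f (y t (k - 1))‖ ^ 2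
    ≤ (f (x 0) - fstar) / (K * T * η) + (((K : ℝ) - 1) / K) * ζ ^ 2 := by
  have hstep : ∀ z g : EuclideanSpace ℝ (Fin d),
      f (z - η • g) ≤ f z - η / 2 * (‖gradient f z‖ ^ 2 - ‖gradient f z - g‖ ^ 2) :=
    step_lemma f L η hL hfd hsmooth hη0 hηL
  -- inner loop bound
  have hinner : ∀ t, 1 ≤ t → ∀ k, 1 ≤ k → k ≤ K →
      f (y t k) ≤ f (y t 0) - η / 2 * ‖gradient f (y t 0)‖ ^ 2
        - ∑ j ∈ Finset.Icc 2 k,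
            (η / 2 * ((1 - m) * ‖gradient f (y t (j - 1))‖ ^ 2 - ζ ^ 2)) := by
    intro t ht k hk
    induction k, hk using Nat.le_induction with
    | base =>
      intro _
      rw [Finset.Icc_eq_empty (by omega : ¬ (2:ℕ) ≤ 1), Finset.sum_empty, hy1 t ht]
      have := hstep (y t 0) (gradient f (y t 0))
      simpa using this
    | succ k hk1 ih =>
      intro hkK
      have ihk := ih (by omega)
      have hyspec : y t (k + 1) = y t k - η • gradient h (y t k) := by
        have := hyk t ht (k + 1) (by omega) hkK
        simpa using this
      have hs := hstep (y t k) (gradient h (y t k))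
      rw [← hyspec] at hs
      have hb := hbias (y t k)
      have hb' : η / 2 * (‖gradient f (y t k)‖ ^ 2 - ‖gradient f (y t k) - gradient h (y t k)‖ ^ 2)
          ≥ η / 2 * ((1 - m) * ‖gradient f (y t k)‖ ^ 2 - ζ ^ 2) := by
        nlinarith [mul_le_mul_of_nonneg_left hb (by positivity : (0:ℝ) ≤ η / 2)]
      rw [Finset.sum_Icc_succ_top (by omega : 2 ≤ k + 1)]
      simp only [Nat.add_sub_cancel]
      linarith
  -- per outer step
  set D : ℕ → ℝ := fun s => η / 2 * ‖gradient f (x (s - 1))‖ ^ 2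
      + ∑ k ∈ Finset.Icc 2 K,
          (η / 2 * ((1 - m) * ‖gradient f (y s (k - 1))‖ ^ 2 - ζ ^ 2)) with hD
  have hper : ∀ s, 1 ≤ s → f (x s) ≤ f (x (s - 1)) - D s := by
    intro s hs
    have := hinner s hs K hK le_rfl
    rw [hy0 s hs] at this
    rw [hx s hs, hD]
    simp only
    linarith
  have houter : ∀ t, t ≤ T → f (x t) ≤ f (x 0) - ∑ s ∈ Finset.Icc 1 t, D s := by
    intro t
    induction t with
    | zero => simp
    | succ t ih =>
      intro htT
      have h1 := hper (t + 1) (by omega)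
      have h2 := ih (by omega)
      rw [Finset.sum_Icc_succ_top (by omega : 1 ≤ t + 1)]
      simp only [Nat.add_sub_cancel] at h1
      linarith
  have hsum : ∑ s ∈ Finset.Icc 1 T, D s ≤ f (x 0) - fstar := by
    have h1 := houter T le_rfl
    have h2 := hfbdd (x T)
    linarith
  -- expand the sum
  set A : ℝ := ∑ t ∈ Finset.Icc 1 T, ‖gradient f (x (t - 1))‖ ^ 2 with hA
  set B : ℝ := ∑ t ∈ Finset.Icc 1 T, ∑ k ∈ Finset.Icc 2 K, ‖gradient f (y t (k - 1))‖ ^ 2 with hB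
  have hcard : ((Finset.Icc 2 K).card : ℝ) = (K : ℝ) - 1 := by
    rw [Nat.card_Icc]
    have : K + 1 - 2 = K - 1 := by omega
    rw [this, Nat.cast_sub hK, Nat.cast_one]
  have hin : ∀ t', (∑ k ∈ Finset.Icc 2 K,
      (η / 2 * ((1 - m) * ‖gradient f (y t' (k - 1))‖ ^ 2 - ζ ^ 2)))
      = η * (1 - m) / 2 * (∑ k ∈ Finset.Icc 2 K, ‖gradient f (y t' (k - 1))‖ ^ 2)
        - ((K : ℝ) - 1) * (η * ζ ^ 2 / 2) := by
    intro t'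
    rw [Finset.sum_congr rfl (fun k _ => by
      ring : ∀ k ∈ Finset.Icc 2 K,
        (η / 2 * ((1 - m) * ‖gradient f (y t' (k - 1))‖ ^ 2 - ζ ^ 2))
        = η * (1 - m) / 2 * ‖gradient f (y t' (k - 1))‖ ^ 2 - η * ζ ^ 2 / 2)]
    rw [Finset.sum_sub_distrib, ← Finset.mul_sum, Finset.sum_const, nsmul_eq_mul, hcard]
  have hexp : ∑ s ∈ Finset.Icc 1 T, D s
      = η / 2 * A + η * (1 - m) / 2 * B - (T : ℝ) * (((K : ℝ) - 1) * (η * ζ ^ 2 / 2)) := by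
    simp only [hD]
    rw [Finset.sum_add_distrib, ← Finset.mul_sum, ← hA]
    rw [Finset.sum_congr rfl (fun t' _ => hin t'), Finset.sum_sub_distrib, ← Finset.mul_sum, ← hB,
      Finset.sum_const, nsmul_eq_mul, Nat.card_Icc]
    simp
    ring
  rw [hexp] at hsum
  -- final arithmetic
  have hA0 : 0 ≤ A := Finset.sum_nonneg fun _ _ => sq_nonneg _
  have hB0 : 0 ≤ B := Finset.sum_nonneg fun _ _ => Finset.sum_nonneg fun _ _ => sq_nonneg _
  set Kr : ℝ := (K : ℝ) with hKr
  set Tr : ℝ := (T : ℝ) with hTr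
  have hK1 : (1:ℝ) ≤ Kr := by rw [hKr]; exact_mod_cast hK
  have hT1 : (1:ℝ) ≤ Tr := by rw [hTr]; exact_mod_cast hT
  have hKp : (0:ℝ) < Kr := by linarith
  have hTp : (0:ℝ) < Tr := by linarith
  have hKTη : (0:ℝ) < Kr * Tr * η := by positivity
  set C : ℝ := f (x 0) - fstar with hC
  have e1 : (1 / (2 * Kr * Tr)) * A = (η / 2 * A) / (Kr * Tr * η) := by
    field_simp
  have e2 : ((1 - m) / (2 * Kr * Tr)) * B = (η * (1 - m) / 2 * B) / (Kr * Tr * η) := by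
    field_simp
  have e3 : Tr * ((Kr - 1) * (η * ζ ^ 2 / 2)) / (Kr * Tr * η) ≤ ((Kr - 1) / Kr) * ζ ^ 2 := by
    have e3' : Tr * ((Kr - 1) * (η * ζ ^ 2 / 2)) / (Kr * Tr * η) = ((Kr - 1) / Kr) * ζ ^ 2 / 2 := by
      field_simp
    rw [e3']
    have hnn : 0 ≤ ((Kr - 1) / Kr) * ζ ^ 2 :=
      mul_nonneg (div_nonneg (by linarith) (by linarith)) (sq_nonneg ζ)
    linarith
  calc (1 / (2 * Kr * Tr)) * A + ((1 - m) / (2 * Kr * Tr)) * B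
      = (η / 2 * A + η * (1 - m) / 2 * B) / (Kr * Tr * η) := by
        rw [e1, e2, ← add_div]
    _ ≤ (C + Tr * ((Kr - 1) * (η * ζ ^ 2 / 2))) / (Kr * Tr * η) := by
        apply (div_le_div_iff_of_pos_right hKTη).mpr
        linarith
    _ = C / (Kr * Tr * η) + Tr * ((Kr - 1) * (η * ζ ^ 2 / 2)) / (Kr * Tr * η) := by
        rw [add_div]
    _ ≤ C / (Kr * Tr * η) + ((Kr - 1) / Kr) * ζ ^ 2 := by linarith
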